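/- Consider the perceptron with fixed margin condition: a₀ = 0, a_{t+1} = a_t + y_{k(t)} where each update pattern satisfies a_t·y_{k(t)} ≤ (1−ε)·γ_d·‖a_t‖, all patterns satisfy ‖y_k‖ ≤ R, and some unit vector u satisfies u·y_k ≥ γ_d > 0 for all k, with 0 < ε ≤ 1. Then the number t of updates satisfies t ≤ ((1+e^{-1})/(2ε))·(R²/γ_d²)·{ 4·(γ_d/R)·(1 − (γ_d/R)(1−ε)) + ln( ((1+e)/ε)·(R/γ_d)·(1 − (γ_d/R)(1−ε)) ) }. -/

import Mathlib

set_option maxHeartbeats 1000000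

open scoped InnerProductSpace

open Finset in
lemma sum_inv_sqrt_le (n : ℕ) (hn : 1 ≤ n) :
    ∑ t ∈ Finset.Ioc 0 n, (1:ℝ)/Real.sqrt t ≤ 2*Real.sqrt n - 1 := by
  induction n, hn using Nat.le_induction with
  | base => norm_num [Real.sqrt_one]
  | succ n hn ih =>
    rw [Finset.sum_Ioc_succ_top (Nat.zero_le _)]
    have h1 : (0:ℝ) < Real.sqrt n := Real.sqrt_pos.2 (by exact_mod_cast hn)
    have h2 : (0:ℝ) < Real.sqrt (n+1) := Real.sqrt_pos.2 (by positivity)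
    have hs1 : (Real.sqrt n)^2 = (n:ℝ) := Real.sq_sqrt (by positivity)
    have hs2 : (Real.sqrt (n+1))^2 = ((n:ℝ)+1) := Real.sq_sqrt (by positivity)
    have key : 1/Real.sqrt ((n:ℝ)+1) ≤ 2*Real.sqrt (n+1) - 2*Real.sqrt n := by
      rw [div_le_iff₀ h2]
      nlinarith [sq_nonneg (Real.sqrt (n+1) - Real.sqrt n), sq_nonneg (Real.sqrt (n+1) + Real.sqrt n)]
    have hc : ((n:ℝ)+1) = ((n+1 : ℕ) : ℝ) := by push_cast; ring
    rw [← hc] at *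
    linarith [ih]

open Finset in
lemma sum_inv_le_log (n0 n : ℕ) (h0 : 1 ≤ n0) (h : n0 ≤ n) :
    ∑ t ∈ Finset.Ioc n0 n, (1:ℝ)/t ≤ Real.log n - Real.log n0 := by
  induction n, h using Nat.le_induction with
  | base => simp
  | succ n hn ih =>
    rw [Finset.sum_Ioc_succ_top hn]
    have hn1 : (1:ℝ) ≤ (n:ℝ) := by exact_mod_cast le_trans h0 hn
    have hpos : (0:ℝ) < n := by linarith
    have hstep : (1:ℝ)/((n:ℝ)+1) ≤ Real.log ((n:ℝ)+1) - Real.log n := by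
      have hq : (0:ℝ) < (n:ℝ)/((n:ℝ)+1) := by positivity
      have h5 := Real.log_le_sub_one_of_pos hq
      rw [Real.log_div (by positivity) (by positivity)] at h5
      have h2 : (n:ℝ)/((n:ℝ)+1) - 1 = -(1/((n:ℝ)+1)) := by field_simp; ring
      linarith [h5, h2.le, h2.ge]
    push_cast
    push_cast at ih
    linarith

lemma sqrt_le_self_add (x D : ℝ) (hx : 0 < x) (hD : 0 ≤ D) :
    Real.sqrt (x^2 + D) ≤ x + D/(2*x) := by
  have h : x^2 + D ≤ (x + D/(2*x))^2 := by
    have h2 : (x + D/(2*x))^2 = x^2 + D + (D/(2*x))^2 := by field_simp; ring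
    nlinarith [sq_nonneg (D/(2*x))]
  calc Real.sqrt (x^2 + D) ≤ Real.sqrt ((x + D/(2*x))^2) := Real.sqrt_le_sqrt h
    _ = x + D/(2*x) := Real.sqrt_sq (by positivity)

lemma pfm_key (ε g A b : ℝ) (hε : 0 < ε) (hε1 : ε ≤ 1) (hg : 0 < g) (hg1 : g ≤ 1)
    (hA : A = 1 - g*(1-ε)) (hb : b = A*(2-A)/2) :
    b * (Real.log ((1+Real.exp 1)*b/ε) - 1) + g*A + 2*b + b*(g^2-g)
      ≤ 2*g*A + Real.log ((1+Real.exp 1)*A/(ε*g)) / 2 := by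
  have he : (0:ℝ) < 1 + Real.exp 1 := by positivity
  have hAε : ε ≤ A := by nlinarith [mul_nonneg (sub_nonneg.2 hε1) (sub_nonneg.2 hg1)]
  have hA0 : 0 < A := lt_of_lt_of_le hε hAε
  have hA1 : A ≤ 1 := by nlinarith [mul_nonneg hg.le (sub_nonneg.2 hε1)]
  have hb0 : 0 < b := by nlinarith
  have hb2 : b ≤ 1/2 := by nlinarith [sq_nonneg (1-A)]
  have hbA : b ≤ A := by nlinarith [sq_nonneg A]
  have hgA : 1 - A ≤ g := by nlinarith [mul_nonneg hg.le hε.le]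
  have e1 : Real.log ((1+Real.exp 1)*b/ε)
      = Real.log (1+Real.exp 1) + Real.log b - Real.log ε := by
    rw [Real.log_div (by positivity) (ne_of_gt hε), Real.log_mul (ne_of_gt he) (ne_of_gt hb0)]
  have e2 : Real.log ((1+Real.exp 1)*A/(ε*g))
      = Real.log (1+Real.exp 1) + Real.log A - (Real.log ε + Real.log g) := by
    rw [Real.log_div (by positivity) (by positivity),
      Real.log_mul (ne_of_gt he) (ne_of_gt hA0), Real.log_mul (ne_of_gt hε) (ne_of_gt hg)]
  rw [e1, e2]
  have f1 : b * Real.log b ≤ b * Real.log A :=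
    mul_le_mul_of_nonneg_left (Real.log_le_log hb0 hbA) hb0.le
  have f2 : (1/2 - b) * Real.log ε ≤ (1/2 - b) * Real.log A :=
    mul_le_mul_of_nonneg_left (Real.log_le_log hε hAε) (by linarith)
  have f3 : Real.log g ≤ g - 1 := Real.log_le_sub_one_of_pos hg
  have f4 : (0:ℝ) ≤ Real.log (1+Real.exp 1) := Real.log_nonneg (by linarith [Real.exp_pos 1])
  have p3 : b * Real.log (1+Real.exp 1) ≤ 1/2 * Real.log (1+Real.exp 1) :=
    mul_le_mul_of_nonneg_right (by linarith) f4
  have p4 : b*(g^2-g) ≤ 0 :=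
    mul_nonpos_of_nonneg_of_nonpos hb0.le (by nlinarith)
  have p5 : b ≤ g*A + (1-g)/2 := by
    rcases le_total A (1/2) with hc | hc
    · nlinarith [mul_nonneg (sub_nonneg.2 hg1) (sub_nonneg.2 hc), sq_nonneg A]
    · nlinarith [mul_nonneg (sub_nonneg.2 hgA) (sub_nonneg.2 hc),
        mul_nonneg hA0.le (sub_nonneg.2 hA1)]
  linarith

noncomputable def pfmM (β D : ℝ) : ℕ → ℝ
  | 0 => 0
  | (t+1) => Real.sqrt ((pfmM β D t + β)^2 + D)

lemma pfm_div_le (D c x : ℝ) (hD : 0 ≤ D) (hc : 0 < c) (hcx : c ≤ x) :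
    D/(2*x) ≤ D/(2*c) := by
  have hx : 0 < x := lt_of_lt_of_le hc hcx
  rw [div_le_div_iff₀ (by linarith) (by linarith)]
  nlinarith

lemma pfm_div_eq (D R s : ℝ) (hR : R ≠ 0) (hs : s ≠ 0) :
    D/(2*(R*s)) = (D/(2*R))*(1/s) := by
  field_simp

lemma pfm_small (ε g A ρ L2 : ℝ) (hε : 0 < ε) (hε1 : ε ≤ 1) (hg0 : 0 < g) (hg1 : g ≤ 1)
    (hAε : ε ≤ A) (hρ0 : 0 < ρ) (hρg : ρ * g^2 = 1) (hL2 : 2 - g ≤ L2) :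
    ρ + 2 ≤ ((1 + Real.exp (-1))/(2*ε)) * ρ * (4*g*A + L2) := by
  have hexp0 : Real.exp 1 ≠ 0 := (Real.exp_pos 1).ne'
  have h13 : (13:ℝ)/10 ≤ 1 + Real.exp (-1) := by
    rw [Real.exp_neg]
    have hinv : Real.exp 1 * (Real.exp 1)⁻¹ = 1 := mul_inv_cancel₀ hexp0
    have hlt := Real.exp_one_lt_d9
    have hip : (0:ℝ) < (Real.exp 1)⁻¹ := by positivity
    nlinarith
  have hq : 2*ε*(1+2*g^2) ≤ (13/10)*(4*g*ε+(2-g)) := by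
    nlinarith [mul_nonneg (sub_nonneg.2 hε1) (by linarith : (0:ℝ) ≤ 26/10 - (13/10)*g),
      mul_nonneg (mul_nonneg hε.le hg0.le) (sub_nonneg.2 hg1),
      mul_nonneg hε.le (by linarith : (0:ℝ) ≤ 6/10 - (1/10)*g)]
  have hX : 4*g*ε + (2-g) ≤ 4*g*A + L2 := by
    nlinarith [mul_nonneg hg0.le (sub_nonneg.2 hAε)]
  have hXpos : (0:ℝ) ≤ 4*g*ε + (2-g) := by nlinarith [mul_nonneg hg0.le hε.le]
  have hmm : (13/10)*(4*g*ε+(2-g)) ≤ (1+Real.exp (-1))*(4*g*A+L2) :=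
    mul_le_mul h13 hX hXpos (by linarith)
  rw [show ((1 + Real.exp (-1)) / (2 * ε)) * ρ * (4 * g * A + L2)
      = ((1+Real.exp (-1))*(4*g*A+L2)) * ρ / (2*ε) by ring,
    le_div_iff₀ (by positivity)]
  have e1 : (ρ+2) * (2*ε) = (2*ε*(1+2*g^2)) * ρ := by linear_combination (-(4*ε))*hρg
  rw [e1]
  have := mul_le_mul_of_nonneg_right (le_trans hq hmm) hρ0.le
  linarith

lemma pfm_invert (R γ ε Tr g A b ρ L2 : ℝ)
    (hR0 : 0 < R) (hγ : 0 < γ) (hγR : γ ≤ R) (hε : 0 < ε) (hε1 : ε ≤ 1)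
    (hg : g = γ/R) (hA : A = 1 - g*(1-ε)) (hb : b = A*(2-A)/2) (hρ : ρ = R^2/γ^2)
    (hL2 : L2 = Real.log ((1+Real.exp 1)*A/(ε*g)))
    (hTr : 1 ≤ Tr)
    (hmain : γ*Tr ≤ R + (1-ε)*γ*(Tr-1)
        + ((R^2-((1-ε)*γ)^2)/(2*R))*(2*(R/γ + γ/(2*R)) - 1)
        + ((R^2-((1-ε)*γ)^2)/(2*γ))*(Real.log Tr - Real.log ρ)) :
    Tr ≤ ((1 + Real.exp (-1))/(2*ε)) * ρ * (4*g*A + L2) := by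
  have he1 : (0:ℝ) < 1 + Real.exp 1 := by positivity
  have hexp0 : Real.exp 1 ≠ 0 := (Real.exp_pos 1).ne'
  have hg0 : 0 < g := by rw [hg]; positivity
  have hg1 : g ≤ 1 := by rw [hg, div_le_one hR0]; exact hγR
  have hAε : ε ≤ A := by rw [hA]; nlinarith [mul_nonneg (sub_nonneg.2 hε1) (sub_nonneg.2 hg1)]
  have hA0 : 0 < A := lt_of_lt_of_le hε hAε
  have hA1 : A ≤ 1 := by rw [hA]; nlinarith [mul_nonneg hg0.le (sub_nonneg.2 hε1)]
  have hb0 : 0 < b := by rw [hb]; nlinarith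
  have hρ0 : 0 < ρ := by rw [hρ]; positivity
  have hTr0 : (0:ℝ) < Tr := by linarith
  have hDb : R^2-((1-ε)*γ)^2 = 2*b*R^2 := by
    rw [hb, hA, hg]; field_simp; ring
  rw [hDb] at hmain
  have hx0 : (0:ℝ) < (1+Real.exp 1)*b/ε := by positivity
  have hlog : Real.log Tr - Real.log ρ ≤ (Tr/ρ)/((1+Real.exp 1)*b/ε) - 1
      + Real.log ((1+Real.exp 1)*b/ε) := by
    have hu : (0:ℝ) < (Tr/ρ)/((1+Real.exp 1)*b/ε) := by positivity
    have h := Real.log_le_sub_one_of_pos hu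
    rw [Real.log_div (ne_of_gt (div_pos hTr0 hρ0)) (ne_of_gt hx0),
      Real.log_div (ne_of_gt hTr0) (ne_of_gt hρ0)] at h
    linarith
  have hcoef : (0:ℝ) ≤ 2*b*R^2/(2*γ) := by positivity
  have hm2 := mul_le_mul_of_nonneg_left hlog hcoef
  have e6 : (2*b*R^2/(2*γ))*((Tr/ρ)/((1+Real.exp 1)*b/ε) - 1 + Real.log ((1+Real.exp 1)*b/ε))
      = (2*b*R^2/(2*γ))*((Tr/ρ)/((1+Real.exp 1)*b/ε))
        + (2*b*R^2/(2*γ))*(Real.log ((1+Real.exp 1)*b/ε) - 1) := by ring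
  have J1 : (2*b*R^2/(2*γ))*((Tr/ρ)/((1+Real.exp 1)*b/ε)) = ε*γ*Tr/(1+Real.exp 1) := by
    rw [hρ]; field_simp
  have J2 : R - (1-ε)*γ + (2*b*R^2/(2*R))*(2*(R/γ + γ/(2*R)) - 1)
      + (2*b*R^2/(2*γ))*(Real.log ((1+Real.exp 1)*b/ε) - 1)
      = (R^2/γ)*(b*(Real.log ((1+Real.exp 1)*b/ε) - 1) + g*A + 2*b + b*(g^2-g)) := by
    rw [hA, hg]; field_simp; ring
  have hkey := pfm_key ε g A b hε hε1 hg0 hg1 hA hb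
  have hkey2 := mul_le_mul_of_nonneg_left hkey (show (0:ℝ) ≤ R^2/γ by positivity)
  rw [← hL2] at hkey2
  have J3 : (R^2/γ)*(2*g*A + L2/2)
      = (ε*γ*(Real.exp 1/(1+Real.exp 1))) * (((1+Real.exp (-1))/(2*ε))*ρ*(4*g*A+L2)) := by
    rw [Real.exp_neg, hρ]; field_simp; ring
  have J4 : γ*Tr - (1-ε)*γ*(Tr-1) - ε*γ*Tr/(1+Real.exp 1)
      = ε*γ*Tr*(Real.exp 1/(1+Real.exp 1)) + (1-ε)*γ := by
    field_simp; ring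
  have hc : (0:ℝ) < ε*γ*(Real.exp 1/(1+Real.exp 1)) := by positivity
  have e5 : (ε*γ*(Real.exp 1/(1+Real.exp 1)))*Tr = ε*γ*Tr*(Real.exp 1/(1+Real.exp 1)) := by ring
  have hfin : (ε*γ*(Real.exp 1/(1+Real.exp 1)))*Tr
      ≤ (ε*γ*(Real.exp 1/(1+Real.exp 1))) * (((1+Real.exp (-1))/(2*ε))*ρ*(4*g*A+L2)) := by
    linarith [hmain, hm2, e6, J1, J2, hkey2, J3, J4, e5,
      mul_nonneg (mul_nonneg (by linarith : (0:ℝ) ≤ 1-ε) hγ.le) (le_refl (0:ℝ))]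
  exact le_of_mul_le_mul_left hfin hc

theorem pfm_update_bound
    {E : Type*} [NormedAddCommGroup E] [InnerProductSpace ℝ E]
    {m : ℕ} (y : Fin m → E) (a : ℕ → E) (k : ℕ → Fin m) (u : E)
    (R γd ε : ℝ) (T : ℕ)
    (ha0 : a 0 = 0)
    (hupd : ∀ t < T, a (t + 1) = a t + y (k t))
    (hmis : ∀ t < T, ⟪a t, y (k t)⟫_ℝ ≤ (1 - ε) * γd * ‖a t‖)
    (hR : ∀ j, ‖y j‖ ≤ R)
    (hu : ‖u‖ = 1)
    (hγ : γd > 0)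
    (hmargin : ∀ j, ⟪u, y j⟫_ℝ ≥ γd)
    (hε : 0 < ε) (hε1 : ε ≤ 1) :
    (T : ℝ) ≤ ((1 + Real.exp (-1)) / (2 * ε)) * (R ^ 2 / γd ^ 2) *
      (4 * (γd / R) * (1 - (γd / R) * (1 - ε)) +
        Real.log (((1 + Real.exp 1) / ε) * (R / γd) *
          (1 - (γd / R) * (1 - ε)))) := by
  -- basic facts
  have hγR : γd ≤ R := by
    have h1 := hmargin (k 0)
    have h2 := real_inner_le_norm u (y (k 0))
    rw [hu, one_mul] at h2
    exact le_trans (le_trans h1 h2) (hR (k 0))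
  have hR0 : 0 < R := lt_of_lt_of_le hγ hγR
  set β := (1 - ε) * γd with hβdef
  have hβ0 : 0 ≤ β := mul_nonneg (by linarith) hγ.le
  have hβγ : β ≤ γd := by nlinarith
  have hD : 0 ≤ R^2 - β^2 := by nlinarith
  set g := γd / R with hgdef
  have hg0 : 0 < g := by positivity
  have hg1 : g ≤ 1 := by rw [hgdef, div_le_one hR0]; exact hγR
  set A := 1 - g * (1 - ε) with hAdef
  set b := A*(2-A)/2 with hbdef
  have hAε : ε ≤ A := by nlinarith [mul_nonneg (sub_nonneg.2 hε1) (sub_nonneg.2 hg1)]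
  have hA0 : 0 < A := lt_of_lt_of_le hε hAε
  have hA1 : A ≤ 1 := by nlinarith [mul_nonneg hg0.le (sub_nonneg.2 hε1)]
  have hb0 : 0 < b := by rw [hbdef]; nlinarith
  have he1 : (0:ℝ) < 1 + Real.exp 1 := by positivity
  have hexp0 : Real.exp 1 ≠ 0 := (Real.exp_pos 1).ne'
  -- margin lower bound
  have hlow : ∀ t : ℕ, t ≤ T → γd * t ≤ ⟪u, a t⟫_ℝ := by
    intro t
    induction t with
    | zero => intro _; simp [ha0]
    | succ t ih =>
      intro ht
      have ht' : t < T := ht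
      rw [hupd t ht', inner_add_right]
      have h1 := ih (le_of_lt ht')
      have h2 := hmargin (k t)
      push_cast
      linarith
  have hN : ∀ t : ℕ, t ≤ T → γd * t ≤ ‖a t‖ := by
    intro t ht
    have h2 := real_inner_le_norm u (a t)
    rw [hu, one_mul] at h2
    exact le_trans (hlow t ht) h2
  -- recurrence
  have hrec : ∀ t : ℕ, t < T → ‖a (t+1)‖^2 ≤ (‖a t‖ + β)^2 + (R^2 - β^2) := by
    intro t ht
    rw [hupd t ht, @norm_add_sq_real]
    have h1 := hmis t ht
    have h2 : ‖y (k t)‖^2 ≤ R^2 := by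
      have := hR (k t)
      nlinarith [norm_nonneg (y (k t))]
    nlinarith [h1, h2]
  -- majorant sequence
  obtain ⟨M, hM0, hMs⟩ : ∃ M : ℕ → ℝ, M 0 = 0 ∧
      ∀ t : ℕ, M (t+1) = Real.sqrt ((M t + β)^2 + (R^2 - β^2)) :=
    ⟨pfmM β (R^2 - β^2), rfl, fun _ => rfl⟩
  have hMnn : ∀ t : ℕ, 0 ≤ M t := by
    intro t
    cases t with
    | zero => rw [hM0]
    | succ t => rw [hMs]; exact Real.sqrt_nonneg _
  have hMsq : ∀ t : ℕ, (M (t+1))^2 = (M t + β)^2 + (R^2 - β^2) := by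
    intro t
    rw [hMs]
    exact Real.sq_sqrt (by positivity)
  have hMlb : ∀ t : ℕ, (t:ℝ) * R^2 ≤ (M t)^2 := by
    intro t
    induction t with
    | zero => rw [hM0]; norm_num
    | succ t ih =>
      rw [hMsq]
      push_cast
      nlinarith [mul_nonneg hβ0 (hMnn t)]
  have hMrt : ∀ t : ℕ, R * Real.sqrt t ≤ M t := by
    intro t
    have h1 := hMlb t
    have h2 : (R * Real.sqrt t)^2 = (t:ℝ) * R^2 := by
      rw [mul_pow, Real.sq_sqrt (by positivity)]; ring
    have h3 := Real.sqrt_le_sqrt (le_of_eq_of_le h2 h1)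
    rwa [Real.sqrt_sq (by positivity), Real.sqrt_sq (hMnn t)] at h3
  have hNM : ∀ t : ℕ, t ≤ T → ‖a t‖ ≤ M t := by
    intro t
    induction t with
    | zero => intro _; rw [ha0, hM0]; simp
    | succ t ih =>
      intro ht
      have ht' : t < T := ht
      have h1 := hrec t ht'
      have h2 := ih (le_of_lt ht')
      have h5 : (‖a t‖+β)^2 ≤ (M t+β)^2 :=
        pow_le_pow_left₀ (by positivity) (by linarith) 2
      have h3 : ‖a (t+1)‖^2 ≤ (M (t+1))^2 := by
        rw [hMsq]; linarith
      have h4 := Real.sqrt_le_sqrt h3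
      rwa [Real.sqrt_sq (norm_nonneg _), Real.sqrt_sq (hMnn _)] at h4
  have hMγ : ∀ t : ℕ, t ≤ T → γd * t ≤ M t := fun t ht => le_trans (hN t ht) (hNM t ht)
  have hM1 : M 1 = R := by
    rw [hMs 0, hM0, show ((0:ℝ)+β)^2 + (R^2 - β^2) = R^2 by ring]
    exact Real.sqrt_sq hR0.le
  have hstep : ∀ t : ℕ, 1 ≤ t → M (t+1) ≤ M t + β + (R^2-β^2)/(2*(M t + β)) := by
    intro t ht
    have h1 : (1:ℝ) ≤ Real.sqrt t := by
      rw [show (1:ℝ) = Real.sqrt 1 by rw [Real.sqrt_one]]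
      exact Real.sqrt_le_sqrt (by exact_mod_cast ht)
    have hx : 0 < M t + β := by nlinarith [hMrt t]
    rw [hMs]
    exact sqrt_le_self_add _ _ hx hD
  have htel : ∀ j : ℕ, M (j+1) ≤ R + β*j + ∑ t ∈ Finset.Ioc 0 j, (R^2-β^2)/(2*(M t + β)) := by
    intro j
    induction j with
    | zero => rw [show (0:ℕ)+1 = 1 from rfl, hM1]; simp
    | succ j ih =>
      have h1 := hstep (j+1) (Nat.le_add_left 1 j)
      rw [Finset.sum_Ioc_succ_top (Nat.zero_le _)]
      push_cast
      push_cast at ih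
      linarith
  -- normalized: key quantities
  have hDb : R^2 - β^2 = 2*b*R^2 := by
    rw [hbdef, hAdef, hgdef, hβdef]
    field_simp
    ring
  set ρ := R^2/γd^2 with hρdef
  have hρ0 : 0 < ρ := by positivity
  have hρ1 : 1 ≤ ρ := by
    rw [hρdef, le_div_iff₀ (by positivity)]
    nlinarith
  have hρg : ρ * g^2 = 1 := by rw [hρdef, hgdef]; field_simp
  set t0 := ⌈ρ⌉₊ with ht0def
  have ht01 : 1 ≤ t0 := Nat.one_le_ceil_iff.2 hρ0
  have ht0ρ : ρ ≤ (t0:ℝ) := Nat.le_ceil ρ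
  have ht0ρ' : (t0:ℝ) < ρ + 1 := Nat.ceil_lt_add_one hρ0.le
  -- the log argument rewrite
  have hLeq : ((1 + Real.exp 1) / ε) * (R / γd) * A = (1+Real.exp 1)*A/(ε*g) := by
    rw [hgdef]; field_simp
  rw [hLeq]
  set L2 := Real.log ((1+Real.exp 1)*A/(ε*g)) with hL2def
  -- lower bound on L2
  have hl1 : (1:ℝ) ≤ Real.log (1+Real.exp 1) := by
    have h := Real.log_le_log (Real.exp_pos 1) (by linarith : Real.exp 1 ≤ 1 + Real.exp 1)
    rwa [Real.log_exp] at h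
  have hL2lb : 2 - g ≤ L2 := by
    rw [hL2def, Real.log_div (by positivity) (by positivity),
      Real.log_mul (ne_of_gt he1) (ne_of_gt hA0), Real.log_mul (ne_of_gt hε) (ne_of_gt hg0)]
    have f2 : Real.log ε ≤ Real.log A := Real.log_le_log hε hAε
    have f3 : Real.log g ≤ g - 1 := Real.log_le_sub_one_of_pos hg0
    linarith
  have h13 : (13:ℝ)/10 ≤ 1 + Real.exp (-1) := by
    rw [Real.exp_neg]
    have hinv : Real.exp 1 * (Real.exp 1)⁻¹ = 1 := mul_inv_cancel₀ hexp0
    have hlt := Real.exp_one_lt_d9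
    have hip : 0 < (Real.exp 1)⁻¹ := by positivity
    nlinarith
  by_cases hTc : T ≤ t0 + 1
  · -- small case
    have hTρ : (T:ℝ) ≤ ρ + 2 := by
      have h1 : (T:ℝ) ≤ (t0:ℝ) + 1 := by exact_mod_cast hTc
      linarith
    exact le_trans hTρ (pfm_small ε g A ρ L2 hε hε1 hg0 hg1 hAε hρ0 hρg hL2lb)
  · -- main case
    push_neg at hTc
    have hTc' : t0 + 2 ≤ T := hTc
    obtain ⟨n, hn⟩ : ∃ n, T = n + 1 := ⟨T-1, by omega⟩
    have hnt0 : t0 + 1 ≤ n := by omega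
    have hn1 : 1 ≤ n := by omega
    have hTn : (T:ℝ) = (n:ℝ) + 1 := by rw [hn]; push_cast; ring
    have hncast : (1:ℝ) ≤ (n:ℝ) := by exact_mod_cast hn1
    have hT1 : (1:ℝ) ≤ (T:ℝ) := by rw [hTn]; linarith
    have hTpos : (0:ℝ) < T := by linarith
    -- telescoped bound
    have hA2 : M T ≤ R + β*n + ∑ t ∈ Finset.Ioc 0 n, (R^2-β^2)/(2*(M t + β)) := by
      rw [hn]; exact htel n
    have hA1' : γd * T ≤ M T := hMγ T le_rfl
    -- split the sum
    have hsplit : ∑ t ∈ Finset.Ioc 0 n, (R^2-β^2)/(2*(M t + β))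
        = (∑ t ∈ Finset.Ioc 0 t0, (R^2-β^2)/(2*(M t + β)))
          + ∑ t ∈ Finset.Ioc t0 n, (R^2-β^2)/(2*(M t + β)) :=
      (Finset.sum_Ioc_consecutive _ (Nat.zero_le t0) (by omega)).symm
    -- part 1
    have hpart1 : ∑ t ∈ Finset.Ioc 0 t0, (R^2-β^2)/(2*(M t + β))
        ≤ ((R^2-β^2)/(2*R)) * (2*Real.sqrt t0 - 1) := by
      have hterm : ∀ t ∈ Finset.Ioc 0 t0, (R^2-β^2)/(2*(M t + β))
          ≤ ((R^2-β^2)/(2*R)) * (1/Real.sqrt t) := by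
        intro t htm
        rw [Finset.mem_Ioc] at htm
        have hst : (0:ℝ) < Real.sqrt t := Real.sqrt_pos.2 (by exact_mod_cast htm.1)
        calc (R^2-β^2)/(2*(M t + β)) ≤ (R^2-β^2)/(2*(R*Real.sqrt t)) :=
              pfm_div_le _ _ _ hD (mul_pos hR0 hst)
                (le_trans (hMrt t) (le_add_of_nonneg_right hβ0))
          _ = ((R^2-β^2)/(2*R)) * (1/Real.sqrt t) := pfm_div_eq _ _ _ hR0.ne' hst.ne'
      calc ∑ t ∈ Finset.Ioc 0 t0, (R^2-β^2)/(2*(M t + β))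
          ≤ ∑ t ∈ Finset.Ioc 0 t0, ((R^2-β^2)/(2*R)) * (1/Real.sqrt t) :=
            Finset.sum_le_sum hterm
        _ = ((R^2-β^2)/(2*R)) * ∑ t ∈ Finset.Ioc 0 t0, (1:ℝ)/Real.sqrt t := by
            rw [Finset.mul_sum]
        _ ≤ ((R^2-β^2)/(2*R)) * (2*Real.sqrt t0 - 1) :=
            mul_le_mul_of_nonneg_left (sum_inv_sqrt_le t0 ht01) (by positivity)
    -- part 2
    have hpart2 : ∑ t ∈ Finset.Ioc t0 n, (R^2-β^2)/(2*(M t + β))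
        ≤ ((R^2-β^2)/(2*γd)) * (Real.log n - Real.log t0) := by
      have hterm : ∀ t ∈ Finset.Ioc t0 n, (R^2-β^2)/(2*(M t + β))
          ≤ ((R^2-β^2)/(2*γd)) * (1/(t:ℝ)) := by
        intro t htm
        rw [Finset.mem_Ioc] at htm
        have ht1 : 1 ≤ t := le_trans ht01 (le_of_lt htm.1)
        have htT : t ≤ T := by omega
        have htc : (0:ℝ) < (t:ℝ) := by exact_mod_cast lt_of_lt_of_le Nat.zero_lt_one ht1
        calc (R^2-β^2)/(2*(M t + β)) ≤ (R^2-β^2)/(2*(γd*(t:ℝ))) :=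
              pfm_div_le _ _ _ hD (mul_pos hγ htc)
                (le_trans (hMγ t htT) (le_add_of_nonneg_right hβ0))
          _ = ((R^2-β^2)/(2*γd)) * (1/(t:ℝ)) := pfm_div_eq _ _ _ hγ.ne' htc.ne'
      calc ∑ t ∈ Finset.Ioc t0 n, (R^2-β^2)/(2*(M t + β))
          ≤ ∑ t ∈ Finset.Ioc t0 n, ((R^2-β^2)/(2*γd)) * (1/(t:ℝ)) :=
            Finset.sum_le_sum hterm
        _ = ((R^2-β^2)/(2*γd)) * ∑ t ∈ Finset.Ioc t0 n, (1:ℝ)/(t:ℝ) := by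
            rw [Finset.mul_sum]
        _ ≤ ((R^2-β^2)/(2*γd)) * (Real.log n - Real.log t0) :=
            mul_le_mul_of_nonneg_left (sum_inv_le_log t0 n ht01 (by omega)) (by positivity)
    -- sqrt t0 bound
    have hsq : Real.sqrt t0 ≤ R/γd + γd/(2*R) := by
      have e2 : (R/γd + γd/(2*R))^2 = ρ + 1 + (γd/(2*R))^2 := by
        rw [hρdef]; field_simp; ring
      have h1 : (t0:ℝ) ≤ (R/γd + γd/(2*R))^2 := by
        rw [e2]; linarith only [ht0ρ', sq_nonneg (γd/(2*R))]
      have h3 := Real.sqrt_le_sqrt h1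
      rwa [Real.sqrt_sq (by positivity)] at h3
    have hsc1 : ((R^2-β^2)/(2*R))*(2*Real.sqrt t0 - 1)
        ≤ ((R^2-β^2)/(2*R))*(2*(R/γd + γd/(2*R)) - 1) :=
      mul_le_mul_of_nonneg_left (by linarith only [hsq]) (by positivity)
    -- log comparison
    have hlogn : Real.log n ≤ Real.log T := by
      apply Real.log_le_log (by linarith)
      rw [hTn]; linarith
    have hlogt0 : Real.log ρ ≤ Real.log t0 := Real.log_le_log hρ0 ht0ρ
    have hsc2 : ((R^2-β^2)/(2*γd))*(Real.log n - Real.log t0)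
        ≤ ((R^2-β^2)/(2*γd))*(Real.log T - Real.log ρ) :=
      mul_le_mul_of_nonneg_left (by linarith only [hlogn, hlogt0]) (by positivity)
    -- main chain
    have hmain : γd*(T:ℝ) ≤ R + β*((T:ℝ)-1)
        + ((R^2-β^2)/(2*R))*(2*(R/γd + γd/(2*R)) - 1)
        + ((R^2-β^2)/(2*γd))*(Real.log T - Real.log ρ) := by
      have hb1 : β*(n:ℝ) = β*((T:ℝ)-1) := by rw [hTn]; ring
      linarith only [hA1', hA2, hsplit.le, hsplit.ge, hpart1, hpart2, hsc1, hsc2, hb1.le, hb1.ge]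
    rw [hβdef] at hmain
    exact pfm_invert R γd ε (T:ℝ) g A b ρ L2 hR0 hγ hγR hε hε1
      hgdef hAdef hbdef hρdef hL2def hT1 hmain
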